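/- Let T be a tournament on 6 vertices with score sequence (1,2,3,3,3,3). Let a be the vertex of out-degree 1, b the vertex of out-degree 2, and let T' be the subtournament induced on the four vertices of out-degree 3. Then T' has score sequence (1,1,1,3) or (1,1,2,2), and if the edge between a and b is oriented from a to b, then T' has score sequence (1,1,2,2). -/
import Mathlib


open Finset

/-- A tournament on `Fin n`: irreflexive, and between any two distinct
vertices exactly one directed edge. -/
def IsTournament {n : ℕ} (T : Fin n → Fin n → Bool) : Prop :=
  (∀ v, T v v = false) ∧ ∀ u v : Fin n, u ≠ v → (T u v = !T v u)

/-- The score (out-degree) of a vertex in a tournament. -/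
def score {n : ℕ} (T : Fin n → Fin n → Bool) (v : Fin n) : ℕ :=
  (Finset.univ.filter (fun w => T v w = true)).card

/-- A consistently oriented (directed) cycle, given by an injective cyclic
sequence of vertices each beating the next. -/
def IsDirCycle {n m : ℕ} (T : Fin n → Fin n → Bool) (c : Fin (m + 1) → Fin n) : Prop :=
  Function.Injective c ∧ ∀ i, T (c i) (c (i + 1)) = true


lemma ms_aux (s : Multiset ℕ) (hc : Multiset.card s = 4)
    (h1 : ∀ x ∈ s, 1 ≤ x) (h3 : ∀ x ∈ s, x ≤ 3) (hs : s.sum = 6) :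
    s = ({1,1,1,3} : Multiset ℕ) ∨ s = ({1,1,2,2} : Multiset ℕ) := by
  have hpos : 0 < Multiset.card s := by omega
  obtain ⟨a, ha⟩ := Multiset.card_pos_iff_exists_mem.1 hpos
  obtain ⟨t, rfl⟩ := Multiset.exists_cons_of_mem ha
  simp only [Multiset.card_cons] at hc
  have ht : Multiset.card t = 3 := by omega
  obtain ⟨x, y, z, rfl⟩ := Multiset.card_eq_three.1 ht
  have hma : 1 ≤ a ∧ a ≤ 3 := ⟨h1 a (by simp), h3 a (by simp)⟩
  have hmx : 1 ≤ x ∧ x ≤ 3 := ⟨h1 x (by simp), h3 x (by simp)⟩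
  have hmy : 1 ≤ y ∧ y ≤ 3 := ⟨h1 y (by simp), h3 y (by simp)⟩
  have hmz : 1 ≤ z ∧ z ≤ 3 := ⟨h1 z (by simp), h3 z (by simp)⟩
  obtain ⟨ha1, ha3⟩ := hma; obtain ⟨hx1, hx3⟩ := hmx
  obtain ⟨hy1, hy3⟩ := hmy; obtain ⟨hz1, hz3⟩ := hmz
  simp only [Multiset.sum_cons, Multiset.insert_eq_cons, Multiset.sum_singleton] at hs
  interval_cases a <;> interval_cases x <;> interval_cases y <;> interval_cases z <;>
    first | omega | decide

lemma ms_aux2 (s : Multiset ℕ) (hc : Multiset.card s = 4)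
    (h1 : ∀ x ∈ s, 1 ≤ x) (h3 : ∀ x ∈ s, x ≤ 2) (hs : s.sum = 6) :
    s = ({1,1,2,2} : Multiset ℕ) := by
  have hpos : 0 < Multiset.card s := by omega
  obtain ⟨a, ha⟩ := Multiset.card_pos_iff_exists_mem.1 hpos
  obtain ⟨t, rfl⟩ := Multiset.exists_cons_of_mem ha
  simp only [Multiset.card_cons] at hc
  have ht : Multiset.card t = 3 := by omega
  obtain ⟨x, y, z, rfl⟩ := Multiset.card_eq_three.1 ht
  have ha1 := h1 a (by simp); have ha3 := h3 a (by simp)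
  have hx1 := h1 x (by simp); have hx3 := h3 x (by simp)
  have hy1 := h1 y (by simp); have hy3 := h3 y (by simp)
  have hz1 := h1 z (by simp); have hz3 := h3 z (by simp)
  simp only [Multiset.sum_cons, Multiset.insert_eq_cons, Multiset.sum_singleton] at hs
  interval_cases a <;> interval_cases x <;> interval_cases y <;> interval_cases z <;>
    first | omega | decide
/-- In a 6-vertex tournament with score sequence `(1,2,3,3,3,3)`, the induced
subtournament `T'` on the four vertices of out-degree 3 has score sequence
`(1,1,1,3)` or `(1,1,2,2)`; and if the edge between the vertices of out-degree
1 and 2 is oriented from the former to the latter, then `T'` has score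
sequence `(1,1,2,2)`. -/
theorem six_tournament_1233 {T : Fin 6 → Fin 6 → Bool}
    (hT : IsTournament T) (a b : Fin 6) (hab : a ≠ b)
    (ha : score T a = 1) (hb : score T b = 2)
    (hrest : ∀ x : Fin 6, x ≠ a → x ≠ b → score T x = 3) :
    let C : Finset (Fin 6) := Finset.univ.filter (fun x => x ≠ a ∧ x ≠ b)
    let score' : Fin 6 → ℕ := fun x => (C.filter (fun y => T x y = true)).card
    (Multiset.map score' C.val = ({1, 1, 1, 3} : Multiset ℕ) ∨
      Multiset.map score' C.val = ({1, 1, 2, 2} : Multiset ℕ)) ∧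
    (T a b = true → Multiset.map score' C.val = ({1, 1, 2, 2} : Multiset ℕ)) := by
  intro C score'
  obtain ⟨hirr, hanti⟩ := hT
  have hCmem : ∀ x : Fin 6, x ∈ C ↔ x ≠ a ∧ x ≠ b := by
    intro x; simp [C, Finset.mem_filter]
  have hCsd : C = (Finset.univ : Finset (Fin 6)) \ {a, b} := by
    ext x
    simp only [hCmem, Finset.mem_sdiff, Finset.mem_univ, true_and, Finset.mem_insert,
      Finset.mem_singleton]
    tauto
  have hCcard : C.card = 4 := by
    rw [hCsd, Finset.card_sdiff_of_subset (by simp)]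
    rw [Finset.card_insert_of_notMem (by simp [hab]), Finset.card_singleton]
    simp
  have hdisj : Disjoint C ({a, b} : Finset (Fin 6)) := by
    rw [hCsd]; exact Finset.sdiff_disjoint
  have hunion : C ∪ ({a, b} : Finset (Fin 6)) = Finset.univ := by
    rw [hCsd, Finset.sdiff_union_of_subset (Finset.subset_univ _)]
  have hsplit : ∀ x, score T x =
      score' x + (({a, b} : Finset (Fin 6)).filter (fun y => T x y = true)).card := by
    intro x
    unfold score
    rw [← hunion, Finset.filter_union,
      Finset.card_union_of_disjoint (Finset.disjoint_filter_filter hdisj)]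
  have hk2 : ∀ x, (({a, b} : Finset (Fin 6)).filter (fun y => T x y = true)).card ≤ 2 := by
    intro x
    refine le_trans (Finset.card_filter_le _ _) ?_
    refine le_trans (Finset.card_insert_le _ _) ?_
    simp
  have hbound : ∀ x ∈ C, 1 ≤ score' x ∧ score' x ≤ 3 := by
    intro x hx
    obtain ⟨hxa, hxb⟩ := (hCmem x).1 hx
    have h3 := hrest x hxa hxb
    have h1 := hsplit x
    have h2 := hk2 x
    omega
  -- the sum of scores inside C is 6
  have hscore' : ∀ x, score' x = ∑ y ∈ C, (if T x y = true then 1 else 0) := by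
    intro x; exact Finset.card_filter _ _
  have hpair : ∀ x ∈ C, ∀ y ∈ C,
      ((if T x y = true then 1 else 0) + (if T y x = true then 1 else 0) : ℕ)
        = if x = y then 0 else 1 := by
    intro x _ y _
    by_cases h : x = y
    · subst h; simp [hirr x]
    · rw [hanti x y h]
      cases T y x <;> simp [h]
  have hinner : ∀ x ∈ C, (∑ y ∈ C, if x = y then (0:ℕ) else 1) = 3 := by
    intro x hx
    rw [← Finset.insert_erase hx, Finset.sum_insert (Finset.notMem_erase _ _), if_pos rfl]
    rw [Finset.sum_congr rfl (fun y hy => if_neg (fun h => (Finset.ne_of_mem_erase hy) h.symm))]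
    rw [Finset.sum_const, Finset.card_erase_of_mem hx, hCcard]
    simp
  have hsum : ∑ x ∈ C, score' x = 6 := by
    have hdouble : (∑ x ∈ C, score' x) + (∑ x ∈ C, score' x) = 12 := by
      calc (∑ x ∈ C, score' x) + (∑ x ∈ C, score' x)
          = (∑ x ∈ C, ∑ y ∈ C, if T x y = true then (1:ℕ) else 0)
            + (∑ x ∈ C, ∑ y ∈ C, if T y x = true then (1:ℕ) else 0) := by
            rw [Finset.sum_congr rfl (fun x _ => hscore' x), Finset.sum_comm]
        _ = ∑ x ∈ C, ∑ y ∈ C,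
            ((if T x y = true then (1:ℕ) else 0) + (if T y x = true then 1 else 0)) := by
            rw [← Finset.sum_add_distrib]
            exact Finset.sum_congr rfl fun x _ => (Finset.sum_add_distrib).symm
        _ = ∑ x ∈ C, ∑ y ∈ C, if x = y then (0:ℕ) else 1 :=
            Finset.sum_congr rfl fun x hx =>
              Finset.sum_congr rfl fun y hy => hpair x hx y hy
        _ = ∑ x ∈ C, 3 := Finset.sum_congr rfl hinner
        _ = 12 := by rw [Finset.sum_const, hCcard]; simp
    omega
  have hcardm : Multiset.card (Multiset.map score' C.val) = 4 := by
    rw [Multiset.card_map]; exact hCcard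
  have hsumm : (Multiset.map score' C.val).sum = 6 := hsum
  have hmem1 : ∀ n ∈ Multiset.map score' C.val, 1 ≤ n := by
    intro n hn
    obtain ⟨x, hx, rfl⟩ := Multiset.mem_map.1 hn
    exact (hbound x hx).1
  have hmem3 : ∀ n ∈ Multiset.map score' C.val, n ≤ 3 := by
    intro n hn
    obtain ⟨x, hx, rfl⟩ := Multiset.mem_map.1 hn
    exact (hbound x hx).2
  refine ⟨ms_aux _ hcardm hmem1 hmem3 hsumm, ?_⟩
  intro hTab
  have hawins : Finset.univ.filter (fun y => T a y = true) = {b} := by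
    obtain ⟨c, hc⟩ := Finset.card_eq_one.1 ha
    have hbmem : b ∈ Finset.univ.filter (fun y => T a y = true) :=
      Finset.mem_filter.2 ⟨Finset.mem_univ _, hTab⟩
    rw [hc] at hbmem ⊢
    rw [Finset.mem_singleton.1 hbmem]
  have hxa : ∀ x ∈ C, T x a = true := by
    intro x hx
    obtain ⟨hxa', hxb'⟩ := (hCmem x).1 hx
    have hnx : x ∉ ({b} : Finset (Fin 6)) := by simp [hxb']
    rw [← hawins, Finset.mem_filter] at hnx
    have hfalse : T a x = false := by
      cases h : T a x
      · rfl
      · exact absurd ⟨Finset.mem_univ _, h⟩ hnx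
    rw [hanti x a hxa', hfalse]; rfl
  have hbound2 : ∀ x ∈ C, score' x ≤ 2 := by
    intro x hx
    obtain ⟨hxa', hxb'⟩ := (hCmem x).1 hx
    have h3 := hrest x hxa' hxb'
    have h1 := hsplit x
    have hk1 : 1 ≤ (({a, b} : Finset (Fin 6)).filter (fun y => T x y = true)).card :=
      Finset.card_pos.2 ⟨a, Finset.mem_filter.2 ⟨Finset.mem_insert_self _ _, hxa x hx⟩⟩
    omega
  have hmem2 : ∀ n ∈ Multiset.map score' C.val, n ≤ 2 := by
    intro n hn
    obtain ⟨x, hx, rfl⟩ := Multiset.mem_map.1 hn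
    exact hbound2 x hx
  exact ms_aux2 _ hcardm hmem1 hmem2 hsumm
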